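/- Let β < 0 and Θ > 0, and set C_Θ = 2^Θ·(−β)^{Θ+1}·((2+Θ)/Θ). Then for all μ > 0 and t > 0, (1 + μ²)^{−β} · e^{−μt} ≤ exp(C_Θ/t^Θ − β). -/

import Mathlib

lemma log_aux_stmt3 (Θ a : ℝ) (hΘ : 0 < Θ) (ha : 0 < a) :
    Real.log (1 + a ^ 2) ≤ (2 + Θ) / Θ * a ^ Θ + 1 := by
  have haΘ : (0:ℝ) ≤ a ^ Θ := Real.rpow_nonneg ha.le Θ
  have hc : (0:ℝ) ≤ (2 + Θ) / Θ := by positivity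
  rcases le_or_gt a 1 with h1 | h1
  · have h := Real.log_le_sub_one_of_pos (show (0:ℝ) < 1 + a ^ 2 by positivity)
    nlinarith [mul_nonneg hc haΘ, pow_le_one₀ ha.le h1 (n := 2)]
  · have h2 : Real.log (1 + a ^ 2) ≤ Real.log (2 * a ^ 2) := by
      apply Real.log_le_log (by positivity)
      nlinarith
    have h3 : Real.log (2 * a ^ 2) = Real.log 2 + 2 * Real.log a := by
      rw [Real.log_mul (by norm_num) (by positivity), Real.log_pow]
      push_cast; ring
    have h4 : Real.log 2 ≤ 1 := by
      have := Real.log_le_sub_one_of_pos (by norm_num : (0:ℝ) < 2); linarith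
    have h5 : Θ * Real.log a ≤ a ^ Θ - 1 := by
      have := Real.log_le_sub_one_of_pos (Real.rpow_pos_of_pos ha Θ)
      rwa [Real.log_rpow ha] at this
    have hloga : 0 ≤ Real.log a := Real.log_nonneg h1.le
    have h6 : 2 * Real.log a ≤ 2 / Θ * a ^ Θ := by
      rw [div_mul_eq_mul_div, le_div_iff₀ hΘ]
      nlinarith
    have h7 : (2 + Θ) / Θ * a ^ Θ = 2 / Θ * a ^ Θ + a ^ Θ := by
      field_simp
    linarith

/- Let β < 0, Θ > 0, C_Θ = 2^Θ·(−β)^{Θ+1}·((2+Θ)/Θ). Then for all μ > 0, t > 0,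
   (1 + μ²)^{−β}·e^{−μt} ≤ exp(C_Θ/t^Θ − β). -/
theorem stmt_3 (β Θ : ℝ) (hβ : β < 0) (hΘ : 0 < Θ) (mu t : ℝ) (hmu : 0 < mu) (ht : 0 < t) :
    (1 + mu ^ 2) ^ (-β) * Real.exp (-mu * t) ≤
      Real.exp ((2 : ℝ) ^ Θ * (-β) ^ (Θ + 1) * ((2 + Θ) / Θ) / t ^ Θ - β) := by
  have hb0 : (0:ℝ) < -β := by linarith
  set b : ℝ := -β with hb
  set a : ℝ := 2 * b / t with ha
  have ha0 : 0 < a := by positivity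
  have hat : a * t = 2 * b := by rw [ha, div_mul_cancel₀ _ ht.ne']
  have hx : (0:ℝ) < 1 + mu ^ 2 := by positivity
  rw [Real.rpow_def_of_pos hx, ← Real.exp_add, Real.exp_le_exp]
  have key : Real.log (1 + mu ^ 2) * b + (-mu * t) ≤ b * Real.log (1 + a ^ 2) := by
    rcases le_or_gt mu a with h | h
    · have hlog : Real.log (1 + mu ^ 2) ≤ Real.log (1 + a ^ 2) := by
        apply Real.log_le_log hx
        nlinarith
      nlinarith
    · have hq1 : 1 ≤ mu / a := (one_le_div ha0).mpr h.le
      have h3 : a * (mu / a) = mu := mul_div_cancel₀ mu (ne_of_gt ha0)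
      have h3sq : (a * (mu / a)) ^ 2 = mu ^ 2 := by rw [h3]
      have hmua : 1 + mu ^ 2 ≤ (1 + a ^ 2) * (mu / a) ^ 2 := by nlinarith [h3sq, hq1]
      have hlog : Real.log (1 + mu ^ 2) ≤ Real.log (1 + a ^ 2) + 2 * Real.log (mu / a) := by
        have := Real.log_le_log hx hmua
        rwa [Real.log_mul (by positivity) (by positivity), Real.log_pow,
          Nat.cast_ofNat] at this
      have hlog2 : Real.log (mu / a) ≤ mu / a - 1 :=
        Real.log_le_sub_one_of_pos (by positivity)
      have hdiv : 2 * b * (mu / a) = mu * t := by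
        rw [mul_div_assoc']
        rw [div_eq_iff (ne_of_gt ha0)]
        nlinarith
      have e1 : Real.log (1 + mu ^ 2) * b ≤ (Real.log (1 + a ^ 2) + 2 * Real.log (mu / a)) * b :=
        mul_le_mul_of_nonneg_right hlog hb0.le
      have e2 : b * Real.log (mu / a) ≤ b * (mu / a - 1) :=
        mul_le_mul_of_nonneg_left hlog2 hb0.le
      nlinarith [e1, e2, hdiv]
  have hbound := log_aux_stmt3 Θ a hΘ ha0
  have haT : a ^ Θ = (2:ℝ) ^ Θ * b ^ Θ / t ^ Θ := by
    rw [ha, Real.div_rpow (by positivity) ht.le, Real.mul_rpow (by norm_num) hb0.le]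
  have hbT : b ^ (Θ + 1) = b ^ Θ * b := by
    rw [Real.rpow_add hb0, Real.rpow_one]
  have hC : b * ((2 + Θ) / Θ * a ^ Θ) = (2:ℝ) ^ Θ * b ^ (Θ + 1) * ((2 + Θ) / Θ) / t ^ Θ := by
    rw [haT, hbT]; ring
  calc Real.log (1 + mu ^ 2) * b + (-mu * t) ≤ b * Real.log (1 + a ^ 2) := key
    _ ≤ b * ((2 + Θ) / Θ * a ^ Θ + 1) := by
        exact mul_le_mul_of_nonneg_left hbound hb0.le
    _ = (2:ℝ) ^ Θ * b ^ (Θ + 1) * ((2 + Θ) / Θ) / t ^ Θ + b := by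
        rw [mul_add, hC, mul_one]
    _ = (2:ℝ) ^ Θ * (-β) ^ (Θ + 1) * ((2 + Θ) / Θ) / t ^ Θ - β := by
        rw [hb]; ring
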